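/- Let π ∈ ℤ[i] be a Gaussian prime with p = N(π) ≡ 1 mod 4 a rational prime. Then the quadratic residue symbol x ↦ (x/π)₂ (defined by (x/π)₂ ≡ x^((p-1)/2) mod π) and the character x ↦ (N(x)/p) (Legendre symbol of the norm) are distinct nontrivial quadratic characters on (ℤ[i]/pℤ[i])^×. -/
import Mathlib

section aux
variable (p : ℕ) [hp : Fact p.Prime]

lemma aux_int_coprime (n : ℤ) (hn : (n : ZMod p) ≠ 0) : IsCoprime (n : ℤ) (p : ℤ) := by
  rw [Int.isCoprime_iff_gcd_eq_one]
  have hdvd : ¬ p ∣ n.natAbs := by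
    intro h
    exact hn ((ZMod.intCast_zmod_eq_zero_iff_dvd n p).mpr (Int.natCast_dvd.mpr h))
  have := (Nat.Prime.coprime_iff_not_dvd hp.out).mpr hdvd
  simpa [Int.gcd, Nat.coprime_comm] using this.symm

lemma aux_coprime (n : ℤ) (hn : (n : ZMod p) ≠ 0) :
    IsCoprime ((n : GaussianInt)) ((p : ℕ) : GaussianInt) := by
  have := (aux_int_coprime p n hn).map (Int.castRingHom GaussianInt)
  simpa using this

lemma aux_pi_dvd (π : GaussianInt) (hnorm : π.norm = (p : ℤ)) (m : ℤ)
    (hm : (m : ZMod p) = 0) : π ∣ (m : GaussianInt) := by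
  have h1 : ((π.norm : ℤ) : GaussianInt) = π * star π := Zsqrtd.norm_eq_mul_conj π
  rw [hnorm] at h1
  have hpd : π ∣ ((p : ℕ) : GaussianInt) := ⟨star π, by exact_mod_cast h1⟩
  have : (p : ℤ) ∣ m := (ZMod.intCast_zmod_eq_zero_iff_dvd m p).mp hm
  exact hpd.trans (by simpa using map_dvd (Int.castRingHom GaussianInt) this)

end aux

/-- the quadratic residue symbol x ↦ (x/π)₂ (characterized by
x^((p-1)/2) ≡ ±1 mod π) and x ↦ (N(x)/p) are distinct nontrivial quadratic
characters on (ℤ[i]/pℤ[i])^×, for π a Gaussian prime of norm p ≡ 1 mod 4. -/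
theorem stmt17 (p : ℕ) [hp : Fact p.Prime] (hp4 : p % 4 = 1)
    (π : GaussianInt) (hπ : Prime π) (hnorm : π.norm = (p : ℤ)) :
    (∃ x : GaussianInt, IsCoprime x (p : GaussianInt) ∧
      π ∣ (x ^ ((p - 1) / 2) + 1)) ∧
    (∃ x : GaussianInt, IsCoprime x (p : GaussianInt) ∧
      legendreSym p x.norm = -1) ∧
    (∃ x : GaussianInt, IsCoprime x (p : GaussianInt) ∧
      ((π ∣ (x ^ ((p - 1) / 2) - 1) ∧ legendreSym p x.norm = -1) ∨
       (π ∣ (x ^ ((p - 1) / 2) + 1) ∧ legendreSym p x.norm = 1))) := by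
  have hp5 : 5 ≤ p := by
    have := hp.out.two_le; omega
  have hpe : (p - 1) / 2 = p / 2 := by omega
  have hchar : ringChar (ZMod p) ≠ 2 := by
    rw [ZMod.ringChar_zmod_n]; omega
  obtain ⟨a, ha⟩ := quadraticChar_exists_neg_one hchar
  have ha0 : a ≠ 0 := by
    intro h; rw [h, quadraticChar_zero] at ha; exact absurd ha (by norm_num)
  set n : ℤ := (a.val : ℤ) with hn_def
  have hna : (n : ZMod p) = a := by
    rw [hn_def]; push_cast; simp [ZMod.natCast_val, ZMod.cast_id]
  have hn0 : (n : ZMod p) ≠ 0 := by rw [hna]; exact ha0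
  have hleg : legendreSym p n = -1 := by
    rw [legendreSym, hna]; exact ha
  -- x1 := n : divisibility statement
  have hx1dvd : π ∣ ((n : GaussianInt) ^ ((p - 1) / 2) + 1) := by
    have hmod : ((n ^ ((p - 1) / 2) + 1 : ℤ) : ZMod p) = 0 := by
      push_cast
      rw [hpe, ← legendreSym.eq_pow, hleg]
      norm_num
    have := aux_pi_dvd p π hnorm _ hmod
    convert this using 1
    push_cast
    ring
  refine ⟨⟨(n : GaussianInt), aux_coprime p n hn0, hx1dvd⟩, ?_, ?_⟩
  · -- second: x with legendreSym p x.norm = -1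
    obtain ⟨y, hy⟩ := (ZMod.exists_sq_eq_neg_one_iff (p := p)).mpr (by omega)
    replace hy := hy.symm
    have h2 : (2 : ZMod p) ≠ 0 := by
      have : ((2 : ℕ) : ZMod p) ≠ 0 := by
        rw [Ne, ZMod.natCast_eq_zero_iff]
        intro h; have := Nat.le_of_dvd (by norm_num) h; omega
      exact_mod_cast this
    have hy0 : y ≠ 0 := by
      intro h; rw [h, mul_zero] at hy
      exact one_ne_zero (neg_eq_zero.mp hy.symm)
    set A : ZMod p := (a + 1) / 2 with hA
    set B : ZMod p := (a - 1) / (2 * y) with hB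
    have hAeq : (2 : ZMod p) * A = a + 1 := by rw [hA]; field_simp
    have hBeq : (2 * y) * B = a - 1 := by rw [hB]; field_simp
    have h40 : (4 : ZMod p) ≠ 0 := by
      have : (4 : ZMod p) = 2 * 2 := by norm_num
      rw [this]; exact mul_ne_zero h2 h2
    have hAB : A ^ 2 + B ^ 2 = a := by
      have h4 : (4 : ZMod p) * (A ^ 2 + B ^ 2) = 4 * a := by
        linear_combination (2*A + (a+1)) * hAeq - (2*y*B + (a-1)) * hBeq + 4*B^2 * hy
      exact mul_left_cancel₀ h40 h4
    set x : GaussianInt := ⟨(A.val : ℤ), (B.val : ℤ)⟩ with hx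
    have hxnorm : x.norm = (A.val : ℤ) ^ 2 + (B.val : ℤ) ^ 2 := by
      simp [hx, Zsqrtd.norm]; ring
    have hxmod : ((x.norm : ℤ) : ZMod p) = a := by
      rw [hxnorm]; push_cast
      simp only [ZMod.natCast_val, ZMod.cast_id]
      exact hAB
    have hxn0 : ((x.norm : ℤ) : ZMod p) ≠ 0 := by rw [hxmod]; exact ha0
    have hxcop : IsCoprime x ((p : ℕ) : GaussianInt) := by
      have := aux_coprime p x.norm hxn0
      rw [show ((x.norm : ℤ) : GaussianInt) = x * star x from Zsqrtd.norm_eq_mul_conj x] at this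
      exact this.of_mul_left_left
    refine ⟨x, hxcop, ?_⟩
    rw [legendreSym, hxmod]; exact ha
  · -- third: x = n, symbol is -1 but legendre of norm is +1
    refine ⟨(n : GaussianInt), aux_coprime p n hn0, Or.inr ⟨hx1dvd, ?_⟩⟩
    rw [Zsqrtd.norm_intCast, legendreSym.mul, hleg]
    norm_num
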